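/- Let h > 0, α > 0, and let i, j be nonnegative integers. Let S_i be the i-th sample-and-hold function on the grid of step h, i.e., the indicator of [i·h, (i+1)·h). Then the samples of its Riemann–Liouville fractional integral of order α at the grid nodes satisfy: J^α S_i(j·h) = 0 whenever j ≤ i, and J^α S_i(j·h) = (h^α / Γ(α+1)) · ((j−i)^α − (j−i−1)^α) whenever j > i; i.e., J^α S_i(j·h) = (h^α/Γ(α+1)) · ς_{j−i} with ς_k = k^α − (k−1)^α. -/

import Mathlib

/-- The `i`-th sample-and-hold function on the grid of step `h`:
the indicator of the interval `[i·h, (i+1)·h)`. -/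
noncomputable def shf (h : ℝ) (i : ℕ) (t : ℝ) : ℝ :=
  if (i : ℝ) * h ≤ t ∧ t < ((i : ℝ) + 1) * h then 1 else 0

/-- The Riemann–Liouville fractional integral of order `α` of `f`,
`J^α f(t) = (1/Γ(α)) ∫₀ᵗ (t−τ)^{α−1} f(τ) dτ`. -/
noncomputable def rlIntegral (α : ℝ) (f : ℝ → ℝ) (t : ℝ) : ℝ :=
  (1 / Real.Gamma α) * ∫ τ in (0 : ℝ)..t, (t - τ) ^ (α - 1) * f τ

open MeasureTheory Set

lemma shf_measurable (h : ℝ) (i : ℕ) : Measurable (shf h i) := by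
  have : shf h i = Set.indicator (Set.Ico ((i:ℝ)*h) (((i:ℝ)+1)*h)) (fun _ => (1:ℝ)) := by
    funext t
    simp [shf, Set.indicator, Set.mem_Ico]
  rw [this]
  exact measurable_const.indicator measurableSet_Ico

lemma shf_intInt (α c h : ℝ) (hα : 0 < α) (i : ℕ) (p q : ℝ) :
    IntervalIntegrable (fun τ => (c - τ) ^ (α - 1) * shf h i τ) volume p q := by
  have h1 : IntervalIntegrable (fun τ : ℝ => (c - τ) ^ (α - 1)) volume p q := by
    have := (intervalIntegral.intervalIntegrable_rpow' (a := c - p) (b := c - q)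
      (by linarith : (-1:ℝ) < α - 1)).comp_sub_left c
    simpa using this
  rw [intervalIntegrable_iff] at h1 ⊢
  have h2 := h1.bdd_mul (f := shf h i) ((shf_measurable h i).aestronglyMeasurable)
    (c := 1) (Filter.Eventually.of_forall fun x => by by_cases hx : (i : ℝ) * h ≤ x ∧ x < ((i : ℝ) + 1) * h <;>
      simp [shf, hx])
  exact h2.congr (Filter.Eventually.of_forall fun x => mul_comm _ _)

/-- grid samples of the Riemann–Liouville fractional integral of
the `i`-th sample-and-hold function: `J^α S_i(j·h) = 0` for `j ≤ i`, and
`J^α S_i(j·h) = (h^α/Γ(α+1))·((j−i)^α − (j−i−1)^α)` for `j > i`. -/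
theorem rlIntegral_shf_grid_samples (h α : ℝ) (hh : 0 < h) (hα : 0 < α) (i j : ℕ) :
    (j ≤ i → rlIntegral α (shf h i) ((j : ℝ) * h) = 0) ∧
    (i < j → rlIntegral α (shf h i) ((j : ℝ) * h) =
      (h ^ α / Real.Gamma (α + 1)) *
        (((j : ℝ) - (i : ℝ)) ^ α - ((j : ℝ) - (i : ℝ) - 1) ^ α)) := by
  set c : ℝ := (j : ℝ) * h with hc
  set a : ℝ := (i : ℝ) * h with ha
  set b : ℝ := ((i : ℝ) + 1) * h with hb
  have hane : (volume : Measure ℝ) {a} = 0 := measure_singleton a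
  have hbne : (volume : Measure ℝ) {b} = 0 := measure_singleton b
  constructor
  · intro hji
    have hca : c ≤ a := by
      rw [hc, ha]
      exact mul_le_mul_of_nonneg_right (by exact_mod_cast hji) hh.le
    have : (∫ τ in (0:ℝ)..c, (c - τ) ^ (α - 1) * shf h i τ) = 0 := by
      rw [intervalIntegral.integral_congr_ae (g := fun _ => (0:ℝ))]
      · simp
      · filter_upwards [compl_mem_ae_iff.2 hane] with τ hτa hτ
        have hτ' : τ ≠ a := hτa
        rcases lt_or_ge τ a with hlt | hge
        · have : shf h i τ = 0 := by
            simp only [shf, ← ha]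
            rw [if_neg]
            intro ⟨h1, _⟩
            exact absurd h1 (not_le.2 hlt)
          rw [this, mul_zero]
        · exfalso
          have : τ ∈ Set.Ioc (min 0 c) (max 0 c) := hτ
          have hτc : τ ≤ max 0 c := this.2
          have h0c : (0:ℝ) ≤ c := by positivity
          rw [max_eq_right h0c] at hτc
          have : τ = a := le_antisymm (hτc.trans hca) hge
          exact hτ' this
    rw [rlIntegral, this, mul_zero]
  · intro hij
    have hab : a ≤ b := by
      rw [ha, hb]; nlinarith
    have hbc : b ≤ c := by
      rw [hb, hc]
      have : (i : ℝ) + 1 ≤ (j : ℝ) := by exact_mod_cast hij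
      nlinarith
    have h0a : (0:ℝ) ≤ a := by positivity
    have hII := shf_intInt α c h hα i
    have hsplit1 : (∫ τ in (0:ℝ)..a, (c - τ) ^ (α - 1) * shf h i τ) +
        (∫ τ in a..c, (c - τ) ^ (α - 1) * shf h i τ) =
        ∫ τ in (0:ℝ)..c, (c - τ) ^ (α - 1) * shf h i τ :=
      intervalIntegral.integral_add_adjacent_intervals (hII 0 a) (hII a c)
    have hsplit2 : (∫ τ in a..b, (c - τ) ^ (α - 1) * shf h i τ) +
        (∫ τ in b..c, (c - τ) ^ (α - 1) * shf h i τ) =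
        ∫ τ in a..c, (c - τ) ^ (α - 1) * shf h i τ :=
      intervalIntegral.integral_add_adjacent_intervals (hII a b) (hII b c)
    have hI1 : (∫ τ in (0:ℝ)..a, (c - τ) ^ (α - 1) * shf h i τ) = 0 := by
      rw [intervalIntegral.integral_congr_ae (g := fun _ => (0:ℝ))]
      · simp
      · filter_upwards [compl_mem_ae_iff.2 hane] with τ hτa hτ
        have hτ' : τ ≠ a := hτa
        have : τ ∈ Set.Ioc (min 0 a) (max 0 a) := hτ
        have hτle : τ ≤ a := by
          have := this.2; rwa [max_eq_right h0a] at this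
        have hlt : τ < a := lt_of_le_of_ne hτle hτ'
        have : shf h i τ = 0 := by
          simp only [shf, ← ha]
          rw [if_neg]
          intro ⟨h1, _⟩
          exact absurd h1 (not_le.2 hlt)
        rw [this, mul_zero]
    have hI3 : (∫ τ in b..c, (c - τ) ^ (α - 1) * shf h i τ) = 0 := by
      rw [intervalIntegral.integral_congr_ae (g := fun _ => (0:ℝ))]
      · simp
      · filter_upwards with τ hτ
        have : τ ∈ Set.Ioc (min b c) (max b c) := hτ
        have hblt : b < τ := by
          have := this.1; rwa [min_eq_left hbc] at this
        have : shf h i τ = 0 := by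
          simp only [shf, ← ha, ← hb]
          rw [if_neg]
          intro ⟨_, h2⟩
          exact absurd h2 (not_lt.2 hblt.le)
        rw [this, mul_zero]
    have hI2 : (∫ τ in a..b, (c - τ) ^ (α - 1) * shf h i τ) =
        ∫ τ in a..b, (c - τ) ^ (α - 1) := by
      apply intervalIntegral.integral_congr_ae
      filter_upwards [compl_mem_ae_iff.2 hbne] with τ hτb hτ
      have hτ' : τ ≠ b := hτb
      have : τ ∈ Set.Ioc (min a b) (max a b) := hτ
      rw [min_eq_left hab, max_eq_right hab] at this
      have h1 : a ≤ τ := this.1.le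
      have h2 : τ < b := lt_of_le_of_ne this.2 hτ'
      have : shf h i τ = 1 := by
        simp only [shf, ← ha, ← hb]
        rw [if_pos ⟨h1, h2⟩]
      rw [this, mul_one]
    have hval : (∫ τ in a..b, (c - τ) ^ (α - 1)) = ((c - a) ^ α - (c - b) ^ α) / α := by
      rw [intervalIntegral.integral_comp_sub_left (fun x => x ^ (α - 1)) c]
      rw [integral_rpow (Or.inl (by linarith))]
      norm_num
    have hGamma : Real.Gamma (α + 1) = α * Real.Gamma α := Real.Gamma_add_one hα.ne'
    have hGpos : 0 < Real.Gamma α := Real.Gamma_pos_of_pos hα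
    have hca : c - a = ((j : ℝ) - (i : ℝ)) * h := by rw [hc, ha]; ring
    have hcb : c - b = ((j : ℝ) - (i : ℝ) - 1) * h := by rw [hc, hb]; ring
    have hji1 : (0:ℝ) ≤ (j : ℝ) - (i : ℝ) - 1 := by
      have : (i : ℝ) + 1 ≤ (j : ℝ) := by exact_mod_cast hij
      linarith
    have hji0 : (0:ℝ) ≤ (j : ℝ) - (i : ℝ) := by linarith
    have hcar : (c - a) ^ α = ((j : ℝ) - (i : ℝ)) ^ α * h ^ α := by
      rw [hca, Real.mul_rpow hji0 hh.le]
    have hcbr : (c - b) ^ α = ((j : ℝ) - (i : ℝ) - 1) ^ α * h ^ α := by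
      rw [hcb, Real.mul_rpow hji1 hh.le]
    rw [rlIntegral, ← hsplit1, ← hsplit2, hI1, hI3, hI2, hval, hcar, hcbr, hGamma]
    field_simp
    ring
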